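/- Let G be a minor minimal not-apex graph of connectivity 2 with 2-cut {a, b} and G - a, b = G_1 ⊔ G_2. Then G_1 and G_2 are not both nonplanar. -/

import Mathlib

open SimpleGraph

def K5 : SimpleGraph (Fin 5) := ⊤

def K33 : SimpleGraph (Fin 3 ⊕ Fin 3) := completeBipartiteGraph (Fin 3) (Fin 3)

/-- `H` is a minor of `G`: branch-set (model) definition. -/
def IsMinor {W V : Type} (H : SimpleGraph W) (G : SimpleGraph V) : Prop :=
  ∃ f : W → Set V,
    (∀ w, (f w).Nonempty) ∧
    (∀ w, (G.induce (f w)).Connected) ∧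
    (Pairwise fun w₁ w₂ => Disjoint (f w₁) (f w₂)) ∧
    (∀ w₁ w₂, H.Adj w₁ w₂ → ∃ x ∈ f w₁, ∃ y ∈ f w₂, G.Adj x y)

/-- Planarity, via Wagner's theorem: no `K₅` minor and no `K₃,₃` minor. -/
def Planar {V : Type} (G : SimpleGraph V) : Prop :=
  ¬ IsMinor K5 G ∧ ¬ IsMinor K33 G

def ProperMinor {W V : Type} (H : SimpleGraph W) (G : SimpleGraph V) : Prop :=
  IsMinor H G ∧ ¬ IsMinor G H

def MinorMinimal (P : {V : Type} → SimpleGraph V → Prop) {V : Type} (G : SimpleGraph V) : Prop :=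
  P G ∧ ∀ (W : Type) (H : SimpleGraph W), ProperMinor H G → ¬ P H

/-- `G` together with the extra edge `uv`. -/
def AddEdge {V : Type} (G : SimpleGraph V) (u v : V) : SimpleGraph V :=
  G ⊔ fromEdgeSet {s(u, v)}

/-- `G - v`. -/
def DeleteVert {V : Type} (G : SimpleGraph V) (v : V) :=
  G.induce {u | u ≠ v}

/-- Disjoint union of graphs. -/
def DisjUnion {α β : Type} (G : SimpleGraph α) (H : SimpleGraph β) : SimpleGraph (α ⊕ β) :=
  (G.map Sum.inl) ⊔ (H.map Sum.inr)

/-- `K₂ ∪̇ G`: a `K₂` glued to `G` at the vertex `v` (a pendant vertex). -/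
def Pendant {V : Type} (G : SimpleGraph V) (v : V) : SimpleGraph (Option V) :=
  (G.map some) ⊔ fromEdgeSet {s(none, some v)}

/-- The result of subdividing the edge `uv` of `G`, the new vertex being `none`. -/
def SubdivideEdge {V : Type} (G : SimpleGraph V) (u v : V) : SimpleGraph (Option V) :=
  ((G.deleteEdges {s(u, v)}).map some) ⊔
    fromEdgeSet {s(none, some u), s(none, some v)}

/-- The contraction `G/uv` (realized on the same vertex set: `v` is absorbed into `u`
and left as an isolated vertex, which does not affect planarity). -/
def ContractEdge {V : Type} (G : SimpleGraph V) (u v : V) : SimpleGraph V where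
  Adj a b := a ≠ b ∧ ∃ x y, G.Adj x y ∧
    ((x = v ∧ a = u) ∨ (x ≠ v ∧ a = x)) ∧ ((y = v ∧ b = u) ∨ (y ≠ v ∧ b = y))
  symm := ⟨by
    rintro a b ⟨hab, x, y, hxy, hx, hy⟩
    exact ⟨hab.symm, y, x, hxy.symm, hy, hx⟩⟩
  loopless := ⟨by rintro a ⟨h, -⟩; exact h rfl⟩

/-- `κ(G) ≥ k`: more than `k` vertices and no cut set of fewer than `k` vertices. -/
def VertexConnAtLeast {V : Type} [Fintype V] (G : SimpleGraph V) (k : ℕ) : Prop :=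
  k < Fintype.card V ∧
    ∀ U : Finset V, U.card < k → (G.induce ((↑U : Set V)ᶜ)).Connected

def K5e : SimpleGraph (Fin 5) := K5.deleteEdges {s(0, 1)}

def K33e : SimpleGraph (Fin 3 ⊕ Fin 3) := K33.deleteEdges {s(Sum.inl 0, Sum.inr 0)}

def K2 : SimpleGraph (Fin 2) := ⊤

/-- A planar graph is maximally planar (equivalently, a plane triangulation)
if adding any edge between nonadjacent vertices destroys planarity. -/
def MaximalPlanar {V : Type} (G : SimpleGraph V) : Prop :=
  Planar G ∧ ∀ u v : V, u ≠ v → ¬ G.Adj u v → ¬ Planar (AddEdge G u v)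

/-- Almost nonplanar. -/
def AN {V : Type} (G : SimpleGraph V) : Prop :=
  Planar G ∧ ∃ u v : V, u ≠ v ∧ ¬ G.Adj u v ∧ ¬ Planar (AddEdge G u v)

/-- Completely almost nonplanar. -/
def CAN {V : Type} (G : SimpleGraph V) : Prop :=
  Planar G ∧ (∃ u v : V, u ≠ v ∧ ¬ G.Adj u v) ∧
    ∀ u v : V, u ≠ v → ¬ G.Adj u v → ¬ Planar (AddEdge G u v)

/-- Completely apex: every vertex-deleted subgraph is planar. -/
def CompletelyApex {V : Type} (G : SimpleGraph V) : Prop :=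
  ∀ v : V, Planar (DeleteVert G v)

/-- Incompletely apex. -/
def IA {V : Type} (G : SimpleGraph V) : Prop :=
  ∃ v : V, ¬ Planar (DeleteVert G v)

/-- Incompletely edge apex. -/
def IE {V : Type} (G : SimpleGraph V) : Prop :=
  ∃ e ∈ G.edgeSet, ¬ Planar (G.deleteEdges {e})

/-- Incompletely contraction apex. -/
def IC {V : Type} (G : SimpleGraph V) : Prop :=
  ∃ u v : V, G.Adj u v ∧ ¬ Planar (ContractEdge G u v)

/-- Not apex. -/
def NA {V : Type} (G : SimpleGraph V) : Prop :=
  ∀ v : V, ¬ Planar (DeleteVert G v)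

/-- Not edge apex. -/
def NE {V : Type} (G : SimpleGraph V) : Prop :=
  ∀ e ∈ G.edgeSet, ¬ Planar (G.deleteEdges {e})

/-- Edge apex: some edge deletion (or the graph itself) is planar. -/
def EdgeApex {V : Type} (G : SimpleGraph V) : Prop :=
  Planar G ∨ ∃ e ∈ G.edgeSet, Planar (G.deleteEdges {e})

lemma minor_of_embed {A B W : Type} {K : SimpleGraph W} {GA : SimpleGraph A}
    {GB : SimpleGraph B} (ι : A → B) (hinj : Function.Injective ι)
    (hadj : ∀ x y, GA.Adj x y → GB.Adj (ι x) (ι y)) (h : IsMinor K GA) : IsMinor K GB := by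
  obtain ⟨f, hne, hconn, hdisj, hedge⟩ := h
  refine ⟨fun w => ι '' f w, fun w => (hne w).image ι, fun w => ?_, ?_, ?_⟩
  · let φ : GA.induce (f w) →g GB.induce (ι '' f w) :=
      ⟨fun x => ⟨ι x.1, ⟨x.1, x.2, rfl⟩⟩, by
        rintro ⟨x, hx⟩ ⟨y, hy⟩ hxy
        exact hadj x y hxy⟩
    have hsurj : Function.Surjective φ := by
      rintro ⟨_, ⟨x, hx, rfl⟩⟩
      exact ⟨⟨x, hx⟩, Subtype.ext rfl⟩
    exact (hconn w).map φ hsurj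
  · intro w₁ w₂ hw
    exact Set.disjoint_image_of_injective hinj (hdisj hw)
  · intro w₁ w₂ hw
    obtain ⟨x, hx, y, hy, hxy⟩ := hedge w₁ w₂ hw
    exact ⟨ι x, ⟨x, hx, rfl⟩, ι y, ⟨y, hy, rfl⟩, hadj x y hxy⟩

lemma planar_of_embed {A B : Type} {GA : SimpleGraph A} {GB : SimpleGraph B} (ι : A → B)
    (hinj : Function.Injective ι) (hadj : ∀ x y, GA.Adj x y → GB.Adj (ι x) (ι y))
    (h : Planar GB) : Planar GA :=
  ⟨fun hk => h.1 (minor_of_embed ι hinj hadj hk),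
   fun hk => h.2 (minor_of_embed ι hinj hadj hk)⟩

lemma deleteVert_properMinor {V : Type} [Fintype V] (G : SimpleGraph V) (a : V) :
    ProperMinor (DeleteVert G a) G := by
  classical
  constructor
  · refine ⟨fun x => {x.1}, fun x => ⟨x.1, rfl⟩, fun x => ?_, ?_, ?_⟩
    · haveI : Nonempty ↑({x.1} : Set V) := ⟨⟨x.1, rfl⟩⟩
      refine ⟨fun u v => ?_⟩
      have huv : u = v := Subtype.ext (u.2.trans v.2.symm)
      subst huv; exact SimpleGraph.Reachable.refl u
    · intro x y hxy
      simp only [Set.disjoint_singleton_left, Set.mem_singleton_iff]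
      intro h
      exact hxy (Subtype.ext h)
    · intro x y hxy
      exact ⟨x.1, rfl, y.1, rfl, hxy⟩
  · rintro ⟨f, hne, -, hdisj, -⟩
    have g : ∀ v : V, ∃ u, u ∈ f v := fun v => hne v
    choose g hg using g
    have hginj : Function.Injective g := by
      intro v₁ v₂ h
      by_contra hne'
      exact Set.disjoint_left.mp (hdisj hne') (hg v₁) (h ▸ hg v₂)
    have h1 : Fintype.card V ≤ Fintype.card {u : V // u ≠ a} := by
      have := Fintype.card_le_of_injective g hginj
      exact this.trans_eq (Fintype.card_congr (Equiv.refl _))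
    have h2 : Fintype.card {u : V // u ≠ a} < Fintype.card V :=
      Fintype.card_subtype_lt (x := a) (by simp)
    omega

/-- For a minor minimal not-apex graph of connectivity two with `2`-cut `{a, b}`
and `G - a,b = G₁ ⊔ G₂`, the components `G₁` and `G₂` are not both nonplanar. -/
theorem stmt_14 {V : Type} [Fintype V] (G : SimpleGraph V)
    (hmm : MinorMinimal (fun {_} H => NA H) G)
    (hconn : VertexConnAtLeast G 2 ∧ ¬ VertexConnAtLeast G 3)
    (a b : V) (hab : a ≠ b) (S1 S2 : Set V)
    (hpart : S1 ∪ S2 = {v | v ≠ a ∧ v ≠ b}) (hdisj : Disjoint S1 S2)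
    (h1 : S1.Nonempty) (h2 : S2.Nonempty)
    (hsep : ∀ x ∈ S1, ∀ y ∈ S2, ¬ G.Adj x y) :
    ¬ (¬ Planar (G.induce S1) ∧ ¬ Planar (G.induce S2)) := by
  classical
  rintro ⟨h1p, h2p⟩
  have hS1sub : ∀ v ∈ S1, v ≠ a ∧ v ≠ b := by
    intro v hv
    have : v ∈ S1 ∪ S2 := Or.inl hv
    rw [hpart] at this; exact this
  have hS2sub : ∀ v ∈ S2, v ≠ a ∧ v ≠ b := by
    intro v hv
    have : v ∈ S1 ∪ S2 := Or.inr hv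
    rw [hpart] at this; exact this
  have hnNA := hmm.2 _ _ (deleteVert_properMinor G a)
  simp only [NA, not_forall, not_not] at hnNA
  obtain ⟨w, hw⟩ := hnNA
  by_cases hws : w.1 ∈ S1
  · have hkey : ∀ v : ↥S2, (⟨v.1, (hS2sub v.1 v.2).1⟩ : {u : V // u ≠ a}) ≠ w := by
      intro v h
      exact Set.disjoint_right.mp hdisj ((congrArg Subtype.val h) ▸ v.2) hws
    refine h2p (planar_of_embed (GA := G.induce S2)
      (fun v => ⟨⟨v.1, (hS2sub v.1 v.2).1⟩, hkey v⟩) ?_ ?_ hw)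
    · intro x y h
      have h1 := congrArg Subtype.val h
      have h2 := congrArg Subtype.val h1
      exact Subtype.ext h2
    · intro x y hxy
      exact hxy
  · have hkey : ∀ v : ↥S1, (⟨v.1, (hS1sub v.1 v.2).1⟩ : {u : V // u ≠ a}) ≠ w := by
      intro v h
      exact hws ((congrArg Subtype.val h) ▸ v.2)
    refine h1p (planar_of_embed (GA := G.induce S1)
      (fun v => ⟨⟨v.1, (hS1sub v.1 v.2).1⟩, hkey v⟩) ?_ ?_ hw)
    · intro x y h
      have h1 := congrArg Subtype.val h
      have h2 := congrArg Subtype.val h1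
      exact Subtype.ext h2
    · intro x y hxy
      exact hxy
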